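/- For every x ∈ W^⊥ one has B x (A x) = B (p x) (p x) ≥ 0; every eigenvalue α of A (i.e. A v = α • v for some nonzero v ∈ W^⊥) satisfies α ≥ 0; and for x ∈ W^⊥ one has A x = 0 if and only if p x = 0 if and only if x ∈ U, so the kernel of A equals W^⊥ ∩ U. -/
import Mathlib


noncomputable section

/-- The Minkowski bilinear form of index 1 on `ℝ^{n+2}`:
`B x y = ∑_{i=0}^{n} x i * y i − x (n+1) * y (n+1)`. -/
def mB (n : ℕ) : (Fin (n+2) → ℝ) →ₗ[ℝ] (Fin (n+2) → ℝ) →ₗ[ℝ] ℝ :=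
  LinearMap.mk₂ ℝ
    (fun x y => ∑ i : Fin (n+2), (if (i : ℕ) = n+1 then (-1:ℝ) else 1) * x i * y i)
    (fun x x' y => by
      rw [← Finset.sum_add_distrib]
      exact Finset.sum_congr rfl fun i _ => by simp only [Pi.add_apply]; ring)
    (fun c x y => by
      rw [smul_eq_mul, Finset.mul_sum]
      exact Finset.sum_congr rfl fun i _ => by simp only [Pi.smul_apply, smul_eq_mul]; ring)
    (fun x y y' => by
      rw [← Finset.sum_add_distrib]
      exact Finset.sum_congr rfl fun i _ => by simp only [Pi.add_apply]; ring)
    (fun c x y => by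
      rw [smul_eq_mul, Finset.mul_sum]
      exact Finset.sum_congr rfl fun i _ => by simp only [Pi.smul_apply, smul_eq_mul]; ring)

/-- The orthogonal complement `S^⊥ = {x | ∀ s ∈ S, B x s = 0}` w.r.t. the Minkowski form. -/
def mperp (n : ℕ) (S : Submodule ℝ (Fin (n+2) → ℝ)) : Submodule ℝ (Fin (n+2) → ℝ) where
  carrier := {x | ∀ s ∈ S, mB n x s = 0}
  zero_mem' := fun s _ => by simp
  add_mem' := fun ha hb s hs => by simp [ha s hs, hb s hs]
  smul_mem' := fun c a ha s hs => by simp [ha s hs]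

/-- A subspace is pseudo-euclidean if the Minkowski form restricted to it
is nondegenerate and it contains a timelike vector. -/
def IsPseudoEuclidean (n : ℕ) (S : Submodule ℝ (Fin (n+2) → ℝ)) : Prop :=
  (∀ x ∈ S, (∀ y ∈ S, mB n x y = 0) → x = 0) ∧ ∃ x ∈ S, mB n x x < 0

lemma mB_symm (n : ℕ) (x y : Fin (n+2) → ℝ) : mB n x y = mB n y x := by
  show ∑ i : Fin (n+2), _ = ∑ i : Fin (n+2), _
  exact Finset.sum_congr rfl fun i _ => by ring

lemma mB_eq (n : ℕ) (x y : Fin (n+2) → ℝ) :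
    mB n x y = (∑ i : Fin (n+1), x i.castSucc * y i.castSucc)
      - x (Fin.last (n+1)) * y (Fin.last (n+1)) := by
  show (∑ i : Fin (n+2), (if (i : ℕ) = n+1 then (-1:ℝ) else 1) * x i * y i) = _
  rw [Fin.sum_univ_castSucc]
  simp only [Fin.coe_castSucc, Fin.val_last]
  rw [if_pos trivial]
  have h : ∀ i : Fin (n+1), (if (i : ℕ) = n+1 then (-1:ℝ) else 1) * x i.castSucc * y i.castSucc
      = x i.castSucc * y i.castSucc := fun i => by
    rw [if_neg (Nat.ne_of_lt (by omega))]; ring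
  rw [Finset.sum_congr rfl fun i _ => h i]; ring

/-- Core lemma: if u is timelike and x ⟂ u, then B x x ≥ 0, with equality iff x = 0. -/
lemma mB_pos_of_perp_timelike (n : ℕ) (u x : Fin (n+2) → ℝ)
    (hu : mB n u u < 0) (hx : mB n x u = 0) :
    0 ≤ mB n x x ∧ (mB n x x = 0 → x = 0) := by
  set L := Fin.last (n+1)
  set S := ∑ i : Fin (n+1), x i.castSucc * x i.castSucc with hS
  set T := ∑ i : Fin (n+1), u i.castSucc * u i.castSucc with hT
  set c := ∑ i : Fin (n+1), x i.castSucc * u i.castSucc with hc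
  have hSnn : 0 ≤ S := Finset.sum_nonneg fun i _ => mul_self_nonneg _
  have hTnn : 0 ≤ T := Finset.sum_nonneg fun i _ => mul_self_nonneg _
  have huu : T - u L * u L < 0 := by rw [mB_eq] at hu; exact hu
  have hxu : c = x L * u L := by rw [mB_eq] at hx; linarith [hx]
  have hCS : c^2 ≤ S * T := by
    have := Finset.sum_mul_sq_le_sq_mul_sq Finset.univ (fun i : Fin (n+1) => x i.castSucc)
      (fun i : Fin (n+1) => u i.castSucc)
    calc c^2 ≤ (∑ i : Fin (n+1), (x i.castSucc)^2) * (∑ i : Fin (n+1), (u i.castSucc)^2) := this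
    _ = S * T := by rw [hS, hT]; congr 1 <;> exact Finset.sum_congr rfl fun i _ => (sq _)
  have huL : 0 < u L * u L := by nlinarith
  have hmain : x L * x L ≤ S := by
    have h1 : c^2 = x L * x L * (u L * u L) := by rw [hxu]; ring
    have h2 : S * T ≤ S * (u L * u L) := mul_le_mul_of_nonneg_left (by linarith) hSnn
    have h3 : x L * x L * (u L * u L) ≤ S * (u L * u L) := by linarith
    exact le_of_mul_le_mul_right h3 huL
  have hxx : mB n x x = S - x L * x L := by rw [mB_eq]
  constructor
  · rw [hxx]; linarith
  · intro h0
    rw [hxx] at h0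
    have hxLS : x L * x L = S := by linarith
    have hS0 : S = 0 := by
      by_contra hne
      have hSpos : 0 < S := lt_of_le_of_ne hSnn (Ne.symm hne)
      have h1 : c^2 = S * (u L * u L) := by rw [hxu, ← hxLS]; ring
      have h2 : S * T < S * (u L * u L) := mul_lt_mul_of_pos_left (by linarith) hSpos
      linarith [hCS]
    have hxL : x L = 0 := by nlinarith [hxLS, hS0]
    have hzero : ∀ i : Fin (n+1), x i.castSucc = 0 := by
      intro i
      have h := (Finset.sum_eq_zero_iff_of_nonneg
        (fun i _ => mul_self_nonneg (x (Fin.castSucc i)))).mp hS0 i (Finset.mem_univ i)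
      nlinarith [h]
    funext i
    induction i using Fin.lastCases with
    | last => exact hxL
    | cast i => exact hzero i

/-- `B x (A x) = B (p x) (p x) ≥ 0` on `W^⊥`; every eigenvalue of `A` is
nonnegative; and the kernel of `A` on `W^⊥` is `W^⊥ ∩ U`. -/
theorem A_nonneg_eigenvalues_and_kernel
    (n : ℕ) (hn : 0 < n) (W U : Submodule ℝ (Fin (n+2) → ℝ))
    (hW : IsPseudoEuclidean n W) (hU : IsPseudoEuclidean n U)
    (hsum : W ⊔ U = ⊤)
    (p p' : (Fin (n+2) → ℝ) →ₗ[ℝ] (Fin (n+2) → ℝ))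
    (hp : ∀ x, p x ∈ mperp n U ∧ x - p x ∈ U)
    (hp' : ∀ x, p' x ∈ mperp n W ∧ x - p' x ∈ W)
     :
    (∀ x ∈ mperp n W,
      mB n x (p' (p x)) = mB n (p x) (p x) ∧ 0 ≤ mB n (p x) (p x)) ∧
    (∀ (α : ℝ), ∀ v ∈ mperp n W, v ≠ 0 → p' (p v) = α • v → 0 ≤ α) ∧
    (∀ x ∈ mperp n W, (p' (p x) = 0 ↔ p x = 0) ∧ (p x = 0 ↔ x ∈ U)) := by

    obtain ⟨uW, huWmem, huWt⟩ := hW.2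
    obtain ⟨uU, huUmem, huUt⟩ := hU.2
    -- B is positive definite on mperp n U
    have hUperp : ∀ x ∈ mperp n U, 0 ≤ mB n x x ∧ (mB n x x = 0 → x = 0) := fun x hxp =>
      mB_pos_of_perp_timelike n uU x huUt (hxp uU huUmem)
    have hWperp : ∀ x ∈ mperp n W, 0 ≤ mB n x x ∧ (mB n x x = 0 → x = 0) := fun x hxp =>
      mB_pos_of_perp_timelike n uW x huWt (hxp uW huWmem)
    -- the key identity
    have key : ∀ x ∈ mperp n W, mB n x (p' (p x)) = mB n (p x) (p x) := by
      intro x hx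
      have h1 : mB n x (p x - p' (p x)) = 0 := hx _ (hp' (p x)).2
      have h2 : mB n (p x) (x - p x) = 0 := (hp x).1 _ (hp x).2
      have e1 : mB n x (p' (p x)) = mB n x (p x) := by
        have := map_sub (mB n x) (p x) (p' (p x))
        rw [this] at h1; linarith
      have e2 : mB n (p x) x = mB n (p x) (p x) := by
        have := map_sub (mB n (p x)) x (p x)
        rw [this] at h2; linarith
      rw [e1, mB_symm, e2]
    refine ⟨?_, ?_, ?_⟩
    · intro x hx
      exact ⟨key x hx, (hUperp (p x) (hp x).1).1⟩
    · intro α v hv hv0 heig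
      have h1 : mB n v (p' (p v)) = mB n (p v) (p v) := key v hv
      have h2 : 0 ≤ mB n (p v) (p v) := (hUperp (p v) (hp v).1).1
      have h3 : mB n v (α • v) = α * mB n v v := by
        rw [map_smul]; simp
      have hvv : 0 < mB n v v := by
        rcases (hWperp v hv) with ⟨h4, h5⟩
        rcases lt_or_eq_of_le h4 with h | h
        · exact h
        · exact absurd (h5 h.symm) hv0
      rw [heig, h3] at h1
      nlinarith
    · intro x hx
      constructor
      · constructor
        · intro h0
          have h1 : mB n (p x) (p x) = 0 := by
            rw [← key x hx, h0, map_zero]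
          exact (hUperp (p x) (hp x).1).2 h1
        · intro h0; rw [h0, map_zero]
      · constructor
        · intro h0
          have := (hp x).2
          rw [h0, sub_zero] at this
          exact this
        · intro hxU
          have hpxU : p x ∈ U := by
            have h1 : x - (x - p x) = p x := by ring_nf
            rw [← h1]
            exact Submodule.sub_mem U hxU (hp x).2
          exact hU.1 (p x) hpxU (fun y hy => (hp x).1 y hy)
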